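/- In the first shift algebra S_1 = K⟨x,s | sx = xs + s⟩, for any non-constant polynomial f ∈ K[x], the set S = {f^n : n ∈ ℕ} is NOT a right Ore set: there exist g ∈ S_1 (e.g. g = s) and an element f^k ∈ S such that for no t ∈ S_1 and f^ℓ ∈ S does g · f^ℓ = f^k · t hold. -/
import Mathlib


/-- In the first shift algebra `S₁ = K⟨x,s | sx = (x+1)s⟩` (realized faithfully as
the subalgebra of `End_K(K[x])` generated by multiplication by `X` and the shift operator
`p(X) ↦ p(X+1)`), for any non-constant `f ∈ K[x]` the set `S = {fⁿ : n ∈ ℕ}` is NOT a right Ore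
set: there exist `g ∈ S₁` (e.g. `g = s`) and `f^k ∈ S` such that no `t ∈ S₁` and `f^ℓ ∈ S`
satisfy `g · f^ℓ = f^k · t`. -/
theorem shift_powers_not_ore
    {K : Type*} [Field K] [CharZero K]
    (f : Polynomial K) (hf : f.natDegree ≠ 0)
    (xop sop : Module.End K (Polynomial K))
    (hxop : xop = LinearMap.mulLeft K (Polynomial.X : Polynomial K))
    (hsop : sop = (Polynomial.aeval (Polynomial.X + 1 : Polynomial K) :
        Polynomial K →ₐ[K] Polynomial K).toLinearMap) :
    ∃ g ∈ Algebra.adjoin K {xop, sop}, ∃ k : ℕ,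
      ∀ t ∈ Algebra.adjoin K {xop, sop}, ∀ ℓ : ℕ,
        g * LinearMap.mulLeft K (f ^ ℓ) ≠ LinearMap.mulLeft K (f ^ k) * t := by
  refine ⟨sop, Algebra.subset_adjoin (by simp), 1, ?_⟩
  intro t _ ℓ heq
  have h1 := LinearMap.congr_fun heq 1
  simp only [Module.End.mul_apply, LinearMap.mulLeft_apply, mul_one, hsop,
    AlgHom.toLinearMap_apply, pow_one, map_pow] at h1
  -- h1 : (aeval (X+1) f)^ℓ = f * t 1
  have hdvd : f ∣ (Polynomial.aeval (Polynomial.X + 1 : Polynomial K) f) ^ ℓ := ⟨t 1, h1⟩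
  have hcomp : Polynomial.aeval (Polynomial.X + 1 : Polynomial K) f
      = f.comp (Polynomial.X + 1) := by
    rw [Polynomial.aeval_def, Polynomial.algebraMap_eq]; rfl
  rcases Nat.eq_zero_or_pos ℓ with hℓ | hℓ
  · subst hℓ
    simp only [pow_zero] at hdvd
    exact hf (Polynomial.natDegree_eq_zero_of_isUnit (isUnit_of_dvd_one hdvd))
  · set AC := AlgebraicClosure K
    let φ := algebraMap K AC
    set p : Polynomial AC := f.map φ with hp
    have hf0 : f ≠ 0 := fun h => hf (by simp [h])
    have hp0 : p ≠ 0 := Polynomial.map_ne_zero hf0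
    have hpdeg : p.degree ≠ 0 := by
      rw [hp, Polynomial.degree_map]
      intro h
      exact hf (Polynomial.natDegree_eq_zero_iff_degree_le_zero.mpr h.le)
    obtain ⟨a, ha⟩ := IsAlgClosed.exists_root p hpdeg
    obtain ⟨r, hr⟩ := Polynomial.map_dvd φ hdvd
    rw [hcomp, Polynomial.map_pow, Polynomial.map_comp] at hr
    have hX1 : (Polynomial.X + 1 : Polynomial K).map φ = Polynomial.X + 1 := by
      simp
    rw [hX1] at hr
    -- hr : (p.comp (X+1))^ℓ = p * r
    have key : ∀ n : ℕ, p.eval (a + n) = 0 := by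
      intro n
      induction n with
      | zero => simpa using ha
      | succ n ih =>
        have h2 : ((p.comp (Polynomial.X + 1)) ^ ℓ).eval (a + n) = 0 := by
          rw [hr, Polynomial.eval_mul, ih, zero_mul]
        rw [Polynomial.eval_pow, pow_eq_zero_iff hℓ.ne'] at h2
        rw [Polynomial.eval_comp] at h2
        simpa [add_assoc] using h2
    have hinj : Function.Injective (fun n : ℕ => a + (n : AC)) := by
      intro m n h
      exact Nat.cast_injective (add_left_cancel h)
    have hinf : {x : AC | p.IsRoot x}.Infinite :=
      Set.infinite_of_injective_forall_mem hinj (fun n => key n)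
    exact hinf (Polynomial.finite_setOf_isRoot hp0)
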